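/- Let X and Y be finite-dimensional real Hilbert spaces, A : X → Y linear, and let x, ξ, η be square-integrable random vectors with ξ and η identically distributed, mutually independent, and independent of x. Set y = A x + ξ. Then for any measurable B : Y → X with A B(y+η) square-integrable, the risk E‖A B(y+η) − (y−η)‖² equals E‖A B(y+η) − A x‖² plus a constant independent of B (namely E‖ξ−η‖² minus a cross term that vanishes); consequently the two risks have the same minimizers over B. -/

import Mathlib

open MeasureTheory ProbabilityTheory

private lemma integrable_inner_of_memL2 {Ω : Type*} [MeasurableSpace Ω] {μ : Measure Ω}
    {E : Type*} [NormedAddCommGroup E] [InnerProductSpace ℝ E]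
    {f g : Ω → E} (hf : MemLp f 2 μ) (hg : MemLp g 2 μ) :
    Integrable (fun ω => (inner ℝ (f ω) (g ω) : ℝ)) μ := by
  have hmul : MemLp (fun ω => ‖f ω‖ * ‖g ω‖) 1 μ := by
    have := hf.norm.smul (p := 2) (q := 2) (r := 1) hg.norm
    convert this using 1; funext ω; simp [Pi.smul_apply, smul_eq_mul, mul_comm]
  refine Integrable.mono' (memLp_one_iff_integrable.mp hmul)
    (hf.aestronglyMeasurable.inner hg.aestronglyMeasurable) ?_
  filter_upwards with ω
  simpa using norm_inner_le_norm (𝕜 := ℝ) (f ω) (g ω)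

/-- **Noisier2Inverse risk identity.** For finite-dimensional real Hilbert spaces `X`, `Y`,
a linear map `A : X → Y`, square-integrable random vectors `x`, `ξ`, `η` with `ξ`, `η`
identically distributed, independent of each other and of `x`, and data `y = A x + ξ`,
the noisier risk `E‖A B(y+η) − (y−η)‖²` equals the supervised `Y`-space risk
`E‖A B(y+η) − A x‖²` plus a constant independent of `B`; hence the two risks have the
same minimizers. -/
theorem noisier2inverse_risk_identity
    {Ω : Type*} [MeasurableSpace Ω] (μ : Measure Ω) [IsProbabilityMeasure μ]
    {X Y : Type*}
    [NormedAddCommGroup X] [InnerProductSpace ℝ X] [FiniteDimensional ℝ X]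
    [MeasurableSpace X] [BorelSpace X]
    [NormedAddCommGroup Y] [InnerProductSpace ℝ Y] [FiniteDimensional ℝ Y]
    [MeasurableSpace Y] [BorelSpace Y]
    (A : X →ₗ[ℝ] Y)
    (x : Ω → X) (ξ η : Ω → Y)
    (hx : MemLp x 2 μ) (hξ : MemLp ξ 2 μ) (hη : MemLp η 2 μ)
    (hxm : Measurable x) (hξm : Measurable ξ) (hηm : Measurable η)
    (hid : IdentDistrib ξ η μ μ)
    (hξη : IndepFun ξ η μ)
    (hpair_x : IndepFun (fun ω => (ξ ω, η ω)) x μ)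
    (y : Ω → Y) (hy : y = fun ω => A (x ω) + ξ ω) :
    ∃ c : ℝ,
      (c = (∫ ω, ‖ξ ω - η ω‖ ^ 2 ∂μ)) ∧
      ∀ B : Y → X, Measurable B →
        MemLp (fun ω => A (B (y ω + η ω))) 2 μ →
        (∫ ω, ‖A (B (y ω + η ω)) - (y ω - η ω)‖ ^ 2 ∂μ)
          = (∫ ω, ‖A (B (y ω + η ω)) - A (x ω)‖ ^ 2 ∂μ) + c := by
  have hAc : Continuous A := A.continuous_of_finiteDimensional
  have hAm : Measurable A := hAc.measurable
  -- identically distributed triples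
  have hswap : IndepFun (fun ω => (η ω, ξ ω)) x μ :=
    hpair_x.comp measurable_swap measurable_id
  have hmap1 : μ.map (fun ω => (ξ ω, η ω)) = (μ.map ξ).prod (μ.map η) :=
    (indepFun_iff_map_prod_eq_prod_map_map hξm.aemeasurable hηm.aemeasurable).mp hξη
  have hmap2 : μ.map (fun ω => (η ω, ξ ω)) = (μ.map η).prod (μ.map ξ) :=
    (indepFun_iff_map_prod_eq_prod_map_map hηm.aemeasurable hξm.aemeasurable).mp hξη.symm
  have hkey : IdentDistrib (fun ω => ((ξ ω, η ω), x ω)) (fun ω => ((η ω, ξ ω), x ω)) μ μ := by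
    refine ⟨((hξm.prodMk hηm).prodMk hxm).aemeasurable,
      ((hηm.prodMk hξm).prodMk hxm).aemeasurable, ?_⟩
    have h1 : μ.map (fun ω => ((ξ ω, η ω), x ω))
        = (μ.map (fun ω => (ξ ω, η ω))).prod (μ.map x) :=
      (indepFun_iff_map_prod_eq_prod_map_map (hξm.prodMk hηm).aemeasurable
        hxm.aemeasurable).mp hpair_x
    have h2 : μ.map (fun ω => ((η ω, ξ ω), x ω))
        = (μ.map (fun ω => (η ω, ξ ω))).prod (μ.map x) :=
      (indepFun_iff_map_prod_eq_prod_map_map (hηm.prodMk hξm).aemeasurable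
        hxm.aemeasurable).mp hswap
    rw [h1, h2, hmap1, hmap2, hid.map_eq]
  refine ⟨∫ ω, ‖ξ ω - η ω‖ ^ 2 ∂μ, rfl, ?_⟩
  intro B hB huL2
  set u : Ω → Y := fun ω => A (B (y ω + η ω)) with hu
  have hAx : MemLp (fun ω => A (x ω)) 2 μ := by
    have := (A.toContinuousLinearMap).comp_memLp' hx
    exact this
  set v : Ω → Y := fun ω => u ω - A (x ω) with hv
  have hvL2 : MemLp v 2 μ := huL2.sub hAx
  set w : Ω → Y := fun ω => ξ ω - η ω with hw
  have hwL2 : MemLp w 2 μ := hξ.sub hη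
  -- the cross term vanishes
  have hcross : (∫ ω, (inner ℝ (v ω) (w ω) : ℝ) ∂μ) = 0 := by
    set g : (Y × Y) × X → ℝ :=
      fun p => (inner ℝ (A (B (A p.2 + p.1.1 + p.1.2)) - A p.2) p.1.1 : ℝ) with hg
    have hgm : Measurable g := by
      have hm1 : Measurable (fun p : (Y × Y) × X => A (B (A p.2 + p.1.1 + p.1.2)) - A p.2) := by
        refine Measurable.sub ?_ (hAm.comp measurable_snd)
        exact hAm.comp (hB.comp (((hAm.comp measurable_snd).add
          (measurable_fst.comp measurable_fst)).add (measurable_snd.comp measurable_fst)))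
      exact hm1.inner (measurable_fst.comp measurable_fst)
    have hsum : ∀ ω, y ω + η ω = A (x ω) + ξ ω + η ω := by
      intro ω; simp [hy]
    have heq := (hkey.comp hgm).integral_eq
    have e1 : (fun ω => g ((ξ ω, η ω), x ω)) = fun ω => (inner ℝ (v ω) (ξ ω) : ℝ) := by
      funext ω; simp [hg, hv, hu, hsum ω]
    have e2 : (fun ω => g ((η ω, ξ ω), x ω)) = fun ω => (inner ℝ (v ω) (η ω) : ℝ) := by
      funext ω
      have : A (x ω) + η ω + ξ ω = y ω + η ω := by rw [hsum ω]; abel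
      simp [hg, hv, hu, this]
    have hint1 : Integrable (fun ω => (inner ℝ (v ω) (ξ ω) : ℝ)) μ :=
      integrable_inner_of_memL2 hvL2 hξ
    have hint2 : Integrable (fun ω => (inner ℝ (v ω) (η ω) : ℝ)) μ :=
      integrable_inner_of_memL2 hvL2 hη
    have heq' : (∫ ω, (inner ℝ (v ω) (ξ ω) : ℝ) ∂μ) = ∫ ω, (inner ℝ (v ω) (η ω) : ℝ) ∂μ := by
      rw [← e1, ← e2]; exact heq
    have : (fun ω => (inner ℝ (v ω) (w ω) : ℝ))
        = fun ω => (inner ℝ (v ω) (ξ ω) : ℝ) - (inner ℝ (v ω) (η ω) : ℝ) := by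
      funext ω; simp [hw, inner_sub_right]
    rw [this, integral_sub hint1 hint2, heq', sub_self]
  -- integrability of the squared norms
  have hvsq : Integrable (fun ω => ‖v ω‖ ^ 2) μ := hvL2.norm.integrable_sq
  have hwsq : Integrable (fun ω => ‖w ω‖ ^ 2) μ := hwL2.norm.integrable_sq
  have hinner : Integrable (fun ω => (inner ℝ (v ω) (w ω) : ℝ)) μ :=
    integrable_inner_of_memL2 hvL2 hwL2
  have hpt : ∀ ω, ‖A (B (y ω + η ω)) - (y ω - η ω)‖ ^ 2
      = ‖v ω‖ ^ 2 - 2 * (inner ℝ (v ω) (w ω) : ℝ) + ‖w ω‖ ^ 2 := by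
    intro ω
    have h1 : A (B (y ω + η ω)) - (y ω - η ω) = v ω - w ω := by
      simp only [hv, hw, hu, hy]; abel
    rw [h1, norm_sub_sq_real]
  have hpt2 : ∀ ω, ‖A (B (y ω + η ω)) - A (x ω)‖ ^ 2 = ‖v ω‖ ^ 2 := fun ω => rfl
  calc (∫ ω, ‖A (B (y ω + η ω)) - (y ω - η ω)‖ ^ 2 ∂μ)
      = ∫ ω, (‖v ω‖ ^ 2 - 2 * (inner ℝ (v ω) (w ω) : ℝ) + ‖w ω‖ ^ 2) ∂μ := by
        exact integral_congr_ae (Filter.Eventually.of_forall fun ω => hpt ω)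
    _ = (∫ ω, (‖v ω‖ ^ 2 - 2 * (inner ℝ (v ω) (w ω) : ℝ)) ∂μ) + ∫ ω, ‖w ω‖ ^ 2 ∂μ :=
        integral_add (hvsq.sub (hinner.const_mul 2)) hwsq
    _ = ((∫ ω, ‖v ω‖ ^ 2 ∂μ) - 2 * ∫ ω, (inner ℝ (v ω) (w ω) : ℝ) ∂μ) + ∫ ω, ‖w ω‖ ^ 2 ∂μ := by
        rw [integral_sub hvsq (hinner.const_mul 2), integral_const_mul]
    _ = (∫ ω, ‖v ω‖ ^ 2 ∂μ) + ∫ ω, ‖w ω‖ ^ 2 ∂μ := by rw [hcross]; ring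
    _ = (∫ ω, ‖A (B (y ω + η ω)) - A (x ω)‖ ^ 2 ∂μ) + ∫ ω, ‖ξ ω - η ω‖ ^ 2 ∂μ := by
        simp only [hpt2, hw]
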